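/- The limit as x tends to π/2 from the left of (π²/(π² − 4x²) − (tan x)/x) is +∞. -/

import Mathlib

open Real Filter Topology

private lemma sin_div_self_tendsto :
    Tendsto (fun t : ℝ => Real.sin t / t) (𝓝[≠] (0:ℝ)) (𝓝 1) := by
  have h := hasDerivAt_iff_tendsto_slope.mp (Real.hasDerivAt_sin 0)
  simp only [Real.cos_zero] at h
  refine h.congr (fun x => ?_)
  simp [slope_def_field, Real.sin_zero]

private lemma sub_tendsto :
    Tendsto (fun x : ℝ => π / 2 - x) (𝓝[<] (π / 2)) (𝓝[>] (0:ℝ)) := by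
  apply tendsto_nhdsWithin_of_tendsto_nhds_of_eventually_within
  · have : Tendsto (fun x : ℝ => π / 2 - x) (𝓝 (π / 2)) (𝓝 (π / 2 - π / 2)) :=
      (tendsto_const_nhds.sub tendsto_id)
    simpa using this.mono_left nhdsWithin_le_nhds
  · filter_upwards [self_mem_nhdsWithin] with x (hx : x < π / 2)
    simpa using hx

theorem stmt1 :
    Tendsto (fun x : ℝ => π ^ 2 / (π ^ 2 - 4 * x ^ 2) - Real.tan x / x)
      (𝓝[<] (π / 2)) atTop := by
  have hπ := Real.pi_pos
  have hmem : Set.Ioo 0 (π / 2) ∈ 𝓝[<] (π / 2) :=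
    Ioo_mem_nhdsLT (by linarith)
  -- first factor limit
  have h1 : Tendsto (fun x : ℝ => (π / 2 - x) * (π ^ 2 / (π ^ 2 - 4 * x ^ 2)))
      (𝓝[<] (π / 2)) (𝓝 (π / 4)) := by
    have hcont : Tendsto (fun x : ℝ => π ^ 2 / (2 * (π + 2 * x))) (𝓝[<] (π / 2))
        (𝓝 (π ^ 2 / (2 * (π + 2 * (π / 2))))) := by
      apply Tendsto.mono_left _ nhdsWithin_le_nhds
      apply Tendsto.div tendsto_const_nhds
      · exact (tendsto_const_nhds.mul (tendsto_const_nhds.add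
          (tendsto_const_nhds.mul tendsto_id)))
      · positivity
    have heq : (π ^ 2 / (2 * (π + 2 * (π / 2)))) = π / 4 := by
      field_simp; ring
    rw [heq] at hcont
    refine hcont.congr' ?_
    filter_upwards [hmem] with x hx
    have hx1 : (0:ℝ) < π / 2 - x := by linarith [hx.2]
    have h2x : (0:ℝ) < π + 2 * x := by linarith [hx.1]
    have hd : π ^ 2 - 4 * x ^ 2 ≠ 0 := by nlinarith
    have hne2 : π + 2 * x ≠ 0 := ne_of_gt h2x
    field_simp
    rw [eq_div_iff (by contrapose! hd; linarith)]
    ring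
  -- second factor limit
  have h2 : Tendsto (fun x : ℝ => (π / 2 - x) * (Real.tan x / x))
      (𝓝[<] (π / 2)) (𝓝 (2 / π)) := by
    have hker : Tendsto (fun x : ℝ => (π / 2 - x) / Real.sin (π / 2 - x))
        (𝓝[<] (π / 2)) (𝓝 1) := by
      have hmap : Tendsto (fun x : ℝ => π / 2 - x) (𝓝[<] (π / 2)) (𝓝[≠] (0:ℝ)) :=
        sub_tendsto.mono_right (nhdsWithin_mono _ (fun t ht => ne_of_gt ht))
      have := (sin_div_self_tendsto.inv₀ one_ne_zero).comp hmap
      simp only [inv_one] at this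
      refine this.congr (fun x => ?_)
      simp [Function.comp, inv_div]
    have hsx : Tendsto (fun x : ℝ => Real.sin x / x) (𝓝[<] (π / 2))
        (𝓝 (2 / π)) := by
      have : Tendsto (fun x : ℝ => Real.sin x / x) (𝓝 (π / 2))
          (𝓝 (Real.sin (π / 2) / (π / 2))) :=
        (Real.continuous_sin.continuousAt).div tendsto_id (by positivity)
      have h' := this.mono_left (nhdsWithin_le_nhds (s := Set.Iio (π / 2)))
      have : Real.sin (π / 2) / (π / 2) = 2 / π := by
        rw [Real.sin_pi_div_two]; field_simp
      rwa [this] at h'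
    have hmul := hker.mul hsx
    rw [one_mul] at hmul
    refine hmul.congr' ?_
    filter_upwards [hmem] with x hx
    rw [Real.tan_eq_sin_div_cos, ← Real.sin_pi_div_two_sub x]
    field_simp
  -- product limit
  have hL : Tendsto (fun x : ℝ =>
      (π / 2 - x) * (π ^ 2 / (π ^ 2 - 4 * x ^ 2) - Real.tan x / x))
      (𝓝[<] (π / 2)) (𝓝 (π / 4 - 2 / π)) := by
    have := h1.sub h2
    refine this.congr (fun x => ?_)
    ring
  have hLpos : 0 < π / 4 - 2 / π := by
    rw [sub_pos, div_lt_div_iff₀ hπ (by norm_num)]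
    nlinarith [Real.pi_gt_three]
  have hinv : Tendsto (fun x : ℝ => (π / 2 - x)⁻¹) (𝓝[<] (π / 2)) atTop :=
    tendsto_inv_nhdsGT_zero.comp sub_tendsto
  have := hL.pos_mul_atTop hLpos hinv
  refine this.congr' ?_
  filter_upwards [self_mem_nhdsWithin] with x (hx : x < π / 2)
  have hne : (π / 2 - x) ≠ 0 := by
    have : (0:ℝ) < π / 2 - x := by linarith
    exact ne_of_gt this
  rw [mul_comm (π / 2 - x) _, mul_assoc, mul_inv_cancel₀ hne, mul_one]
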